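/- For the bi-objective problem ORZR with f1 = OneRoyalRoad and f2 = ZeroRoyalRoad on bit-strings of length n = b·ℓ (b > 1), the Pareto set equals exactly the set of bit-strings x in which every block is an all-ones block or an all-zeros block, i.e. the number of all-ones blocks of x plus the number of all-zeros blocks of x equals b. -/
import Mathlib


open Finset

/-- Number of one-bits of a bit-string. -/
def onesCount {n : ℕ} (x : Fin n → Bool) : ℕ :=
  (Finset.univ.filter fun i => x i = true).card

/-- Number of zero-bits of a bit-string. -/
def zerosCount {n : ℕ} (x : Fin n → Bool) : ℕ :=
  (Finset.univ.filter fun i => x i = false).card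

/-- Number of leading one-bits. -/
def leadingOnes {n : ℕ} (x : Fin n → Bool) : ℕ :=
  (Finset.univ.filter fun i : Fin n => ∀ j : Fin n, j ≤ i → x j = true).card

/-- Number of trailing zero-bits. -/
def trailingZeroes {n : ℕ} (x : Fin n → Bool) : ℕ :=
  (Finset.univ.filter fun i : Fin n => ∀ j : Fin n, i ≤ j → x j = false).card

/-- `y` dominates `x` for the bi-objective maximisation problem `(f1, f2)`. -/
def dominates {n : ℕ} (f1 f2 : (Fin n → Bool) → ℕ) (y x : Fin n → Bool) : Prop :=
  f1 x ≤ f1 y ∧ f2 x ≤ f2 y ∧ (f1 x < f1 y ∨ f2 x < f2 y)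

/-- `x` is Pareto optimal: no solution dominates it. -/
def paretoOptimal {n : ℕ} (f1 f2 : (Fin n → Bool) → ℕ) (x : Fin n → Bool) : Prop :=
  ∀ y, ¬ dominates f1 f2 y x

/-- `x` is a non-global Pareto local optimum: not Pareto optimal, and not dominated by
any bit-string at Hamming distance exactly 1. -/
def nonGlobalParetoLocalOpt {n : ℕ} (f1 f2 : (Fin n → Bool) → ℕ) (x : Fin n → Bool) : Prop :=
  ¬ paretoOptimal f1 f2 x ∧ ∀ y, hammingDist y x = 1 → ¬ dominates f1 f2 y x

/-- The ZeroJump function with jump parameter `k`. -/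
def zeroJump (n k : ℕ) (x : Fin n → Bool) : ℕ :=
  if zerosCount x ≤ n - k ∨ x = (fun _ => false) then k + zerosCount x else n - zerosCount x

/-- The OneJump function with jump parameter `k`. -/
def oneJump (n k : ℕ) (x : Fin n → Bool) : ℕ :=
  if onesCount x ≤ n - k ∨ x = (fun _ => true) then k + onesCount x else n - onesCount x

/-- Block `j` (0-indexed) of the bit-string `x` (with `b` blocks of length `ℓ`) is all-ones. -/
def blockAllOnes (b ℓ : ℕ) (x : Fin (b * ℓ) → Bool) (j : Fin b) : Prop :=
  ∀ i : Fin (b * ℓ), (i : ℕ) / ℓ = (j : ℕ) → x i = true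

/-- Block `j` (0-indexed) of the bit-string `x` is all-zeros. -/
def blockAllZeros (b ℓ : ℕ) (x : Fin (b * ℓ) → Bool) (j : Fin b) : Prop :=
  ∀ i : Fin (b * ℓ), (i : ℕ) / ℓ = (j : ℕ) → x i = false

instance (b ℓ : ℕ) (x : Fin (b * ℓ) → Bool) (j : Fin b) : Decidable (blockAllOnes b ℓ x j) := by
  unfold blockAllOnes; infer_instance

instance (b ℓ : ℕ) (x : Fin (b * ℓ) → Bool) (j : Fin b) : Decidable (blockAllZeros b ℓ x j) := by
  unfold blockAllZeros; infer_instance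

/-- OneRoyalRoad: `ℓ` times the number of all-ones blocks. -/
def oneRoyalRoad (b ℓ : ℕ) (x : Fin (b * ℓ) → Bool) : ℕ :=
  ℓ * (Finset.univ.filter fun j : Fin b => blockAllOnes b ℓ x j).card

/-- ZeroRoyalRoad: `ℓ` times the number of all-zeros blocks. -/
def zeroRoyalRoad (b ℓ : ℕ) (x : Fin (b * ℓ) → Bool) : ℕ :=
  ℓ * (Finset.univ.filter fun j : Fin b => blockAllZeros b ℓ x j).card

/-- Number of one-bits in block `j` of `x`. -/
def blockOnes (b ℓ : ℕ) (x : Fin (b * ℓ) → Bool) (j : Fin b) : ℕ :=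
  (Finset.univ.filter fun i : Fin (b * ℓ) => (i : ℕ) / ℓ = (j : ℕ) ∧ x i = true).card

/-- Number of zero-bits in block `j` of `x`. -/
def blockZeros (b ℓ : ℕ) (x : Fin (b * ℓ) → Bool) (j : Fin b) : ℕ :=
  (Finset.univ.filter fun i : Fin (b * ℓ) => (i : ℕ) / ℓ = (j : ℕ) ∧ x i = false).card


lemma block_witness (b ℓ : ℕ) (hℓ : 1 ≤ ℓ) (j : Fin b) :
    ∃ i : Fin (b * ℓ), (i : ℕ) / ℓ = (j : ℕ) := by
  refine ⟨⟨(j : ℕ) * ℓ, ?_⟩, ?_⟩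
  · exact Nat.mul_lt_mul_of_lt_of_le j.isLt le_rfl hℓ
  · exact Nat.mul_div_cancel _ hℓ

lemma ORZR_sum_le (b ℓ : ℕ) (hℓ : 1 ≤ ℓ) (x : Fin (b * ℓ) → Bool) :
    (Finset.univ.filter fun j : Fin b => blockAllOnes b ℓ x j).card +
      (Finset.univ.filter fun j : Fin b => blockAllZeros b ℓ x j).card ≤ b := by
  have hdisj : Disjoint (Finset.univ.filter fun j : Fin b => blockAllOnes b ℓ x j)
      (Finset.univ.filter fun j : Fin b => blockAllZeros b ℓ x j) := by
    rw [Finset.disjoint_left]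
    intro j hj hj'
    simp only [Finset.mem_filter] at hj hj'
    obtain ⟨i, hi⟩ := block_witness b ℓ hℓ j
    have h1 := hj.2 i hi
    have h2 := hj'.2 i hi
    simp [h1] at h2
  calc _ = ((Finset.univ.filter fun j : Fin b => blockAllOnes b ℓ x j) ∪
        (Finset.univ.filter fun j : Fin b => blockAllZeros b ℓ x j)).card :=
        (Finset.card_union_of_disjoint hdisj).symm
    _ ≤ (Finset.univ : Finset (Fin b)).card := Finset.card_le_card (Finset.subset_univ _)
    _ = b := by simp

/-- For ORZR (f1 = OneRoyalRoad, f2 = ZeroRoyalRoad) on bit-strings of length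
n = b·ℓ with b > 1, the Pareto set is exactly the set of bit-strings in which every block is
all-ones or all-zeros, i.e. the number of all-ones blocks plus the number of all-zeros blocks
equals b. -/
theorem ORZR_pareto_set (b ℓ : ℕ) (hb : 1 < b) (hℓ : 1 ≤ ℓ) (x : Fin (b * ℓ) → Bool) :
    paretoOptimal (oneRoyalRoad b ℓ) (zeroRoyalRoad b ℓ) x ↔
      (Finset.univ.filter fun j : Fin b => blockAllOnes b ℓ x j).card +
        (Finset.univ.filter fun j : Fin b => blockAllZeros b ℓ x j).card = b := by
  have hℓ0 : 0 < ℓ := hℓ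
  constructor
  · intro hpo
    by_contra hne
    have hlt : (Finset.univ.filter fun j : Fin b => blockAllOnes b ℓ x j).card +
        (Finset.univ.filter fun j : Fin b => blockAllZeros b ℓ x j).card < b :=
      lt_of_le_of_ne (ORZR_sum_le b ℓ hℓ x) hne
    -- there is a block neither all-ones nor all-zeros
    have hex : ∃ j : Fin b, ¬ blockAllOnes b ℓ x j ∧ ¬ blockAllZeros b ℓ x j := by
      by_contra hno
      push_neg at hno
      have hcover : (Finset.univ : Finset (Fin b)) ⊆
          (Finset.univ.filter fun j : Fin b => blockAllOnes b ℓ x j) ∪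
          (Finset.univ.filter fun j : Fin b => blockAllZeros b ℓ x j) := by
        intro j _
        rcases Classical.em (blockAllOnes b ℓ x j) with h | h
        · exact Finset.mem_union_left _ (by simp [h])
        · exact Finset.mem_union_right _ (by simp [hno j h])
      have := Finset.card_le_card hcover
      rw [Finset.card_univ, Fintype.card_fin] at this
      have := Finset.card_union_le
        (Finset.univ.filter fun j : Fin b => blockAllOnes b ℓ x j)
        (Finset.univ.filter fun j : Fin b => blockAllZeros b ℓ x j)
      omega
    obtain ⟨j, hj1, hj0⟩ := hex
    set y : Fin (b * ℓ) → Bool := fun i => if (i : ℕ) / ℓ = (j : ℕ) then true else x i with hy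
    have hyblk : ∀ (j' : Fin b), (j' : ℕ) ≠ (j : ℕ) →
        ∀ i : Fin (b * ℓ), (i : ℕ) / ℓ = (j' : ℕ) → y i = x i := by
      intro j' hne' i hi
      simp only [hy]
      rw [if_neg (by omega)]
    have hones : (Finset.univ.filter fun j' : Fin b => blockAllOnes b ℓ y j') =
        insert j (Finset.univ.filter fun j' : Fin b => blockAllOnes b ℓ x j') := by
      ext j'
      simp only [Finset.mem_filter, Finset.mem_insert, Finset.mem_univ, true_and]
      rcases Classical.em (j' = j) with h | h
      · subst h
        simp only [true_or, iff_true]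
        intro i hi
        simp [hy, hi]
      · have hne' : (j' : ℕ) ≠ (j : ℕ) := fun hc => h (Fin.ext hc)
        constructor
        · intro hall
          refine Or.inr fun i hi => ?_
          rw [← hyblk j' hne' i hi]; exact hall i hi
        · rintro (hc | hall)
          · exact absurd hc h
          · intro i hi
            rw [hyblk j' hne' i hi]; exact hall i hi
    have hzeros : (Finset.univ.filter fun j' : Fin b => blockAllZeros b ℓ y j') =
        (Finset.univ.filter fun j' : Fin b => blockAllZeros b ℓ x j') := by
      ext j'
      simp only [Finset.mem_filter, Finset.mem_univ, true_and]
      rcases Classical.em (j' = j) with h | h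
      · subst h
        constructor
        · intro hall
          obtain ⟨i, hi⟩ := block_witness b ℓ hℓ j'
          have := hall i hi
          simp [hy, hi] at this
        · intro hall; exact absurd hall hj0
      · have hne' : (j' : ℕ) ≠ (j : ℕ) := fun hc => h (Fin.ext hc)
        constructor
        · intro hall i hi
          rw [← hyblk j' hne' i hi]; exact hall i hi
        · intro hall i hi
          rw [hyblk j' hne' i hi]; exact hall i hi
    have hjnot : j ∉ (Finset.univ.filter fun j' : Fin b => blockAllOnes b ℓ x j') := by
      simp [hj1]
    have hcard1 : (Finset.univ.filter fun j' : Fin b => blockAllOnes b ℓ y j').card =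
        (Finset.univ.filter fun j' : Fin b => blockAllOnes b ℓ x j').card + 1 := by
      rw [hones, Finset.card_insert_of_notMem hjnot]
    refine hpo y ⟨?_, ?_, ?_⟩
    · unfold oneRoyalRoad
      rw [hcard1]
      exact Nat.mul_le_mul_left ℓ (Nat.le_succ _)
    · unfold zeroRoyalRoad
      rw [hzeros]
    · left
      unfold oneRoyalRoad
      rw [hcard1]
      have : (Finset.univ.filter fun j' : Fin b => blockAllOnes b ℓ x j').card <
          (Finset.univ.filter fun j' : Fin b => blockAllOnes b ℓ x j').card + 1 := Nat.lt_succ_self _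
      exact Nat.mul_lt_mul_of_le_of_lt le_rfl this hℓ0
  · intro hsum y hdom
    obtain ⟨h1, h2, h3⟩ := hdom
    simp only [oneRoyalRoad, zeroRoyalRoad] at h1 h2 h3
    have hO : (Finset.univ.filter fun j : Fin b => blockAllOnes b ℓ x j).card ≤
        (Finset.univ.filter fun j : Fin b => blockAllOnes b ℓ y j).card :=
      Nat.le_of_mul_le_mul_left h1 hℓ0
    have hZ : (Finset.univ.filter fun j : Fin b => blockAllZeros b ℓ x j).card ≤
        (Finset.univ.filter fun j : Fin b => blockAllZeros b ℓ y j).card :=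
      Nat.le_of_mul_le_mul_left h2 hℓ0
    have hle := ORZR_sum_le b ℓ hℓ y
    rcases h3 with h3 | h3
    · have := Nat.lt_of_mul_lt_mul_left h3
      omega
    · have := Nat.lt_of_mul_lt_mul_left h3
      omega
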